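/- Let a₁, a₂ ∈ [0,∞), b₂₁ ∈ (−∞,0], b₁₁ ∈ (−∞,0), b₂₂ ∈ (0,∞) and y₁, y₂ ∈ [0,∞). Then e^{b₁₁ t}·e₁(t) → y₁ − a₁/b₁₁ and e^{b₁₁ t}·e₂(t) → −b₂₁·(y₁ − a₁/b₁₁)/(b₂₂ − b₁₁) as t → ∞, i.e., E(Y_t^{(2)}) grows exponentially with rate −b₁₁. (This is a supercritical case of Proposition 3.1.) -/

import Mathlib

open MeasureTheory Filter Real

lemma aux_int_exp (k : ℝ) (hk : k ≠ 0) (t : ℝ) :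
    ∫ u in (0:ℝ)..t, Real.exp (k*u) = (Real.exp (k*t) - 1)/k := by
  have h : ∀ x ∈ Set.uIcc (0:ℝ) t, HasDerivAt (fun u => Real.exp (k*u)/k) (Real.exp (k*x)) x := by
    intro x _
    have h1 : HasDerivAt (fun u : ℝ => k*u) k x := by simpa using (hasDerivAt_id x).const_mul k
    have h2 := (Real.hasDerivAt_exp (k*x)).comp x h1
    have h3 := h2.div_const k
    simpa [mul_div_assoc, mul_div_cancel_right₀, hk] using h3
  rw [intervalIntegral.integral_eq_sub_of_hasDerivAt h
    ((Real.continuous_exp.comp (continuous_const.mul continuous_id)).intervalIntegrable 0 t)]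
  simp [sub_div]

lemma aux_tendsto_exp (c : ℝ) (hc : c < 0) :
    Tendsto (fun t : ℝ => Real.exp (c*t)) atTop (nhds 0) := by
  have h1 : Tendsto (fun t : ℝ => c*t) atTop atBot := by
    have := Filter.Tendsto.const_mul_atTop (show (0:ℝ) < -c by linarith) (tendsto_id (α := ℝ))
    have h2 : Tendsto (fun t : ℝ => -((-c)*t)) atTop atBot := tendsto_neg_atBot_iff.mpr this
    convert h2 using 2 with t
    ring
  exact Real.tendsto_exp_atBot.comp h1

set_option maxHeartbeats 1000000 in
theorem doubleHeston_supercritical_mean_Y2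
    (a1 a2 b21 b11 b22 y1 y2 : ℝ)
    (ha1 : 0 ≤ a1) (ha2 : 0 ≤ a2) (hb21 : b21 ≤ 0)
    (hb11 : b11 < 0) (hb22 : 0 < b22)
    (hy1 : 0 ≤ y1) (hy2 : 0 ≤ y2)
    (e1 e2 : ℝ → ℝ)
    (he1 : ∀ t, 0 ≤ t →
      e1 t = y1 * Real.exp (-b11 * t) + a1 * ∫ u in (0:ℝ)..t, Real.exp (-b11 * u))
    (he2 : ∀ t, 0 ≤ t →
      e2 t = y2 * Real.exp (-b22 * t) + a2 * (∫ u in (0:ℝ)..t, Real.exp (-b22 * u))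
        - b21 * ∫ s in (0:ℝ)..t, Real.exp (-b22 * (t - s)) * e1 s) :
    Tendsto (fun t => Real.exp (b11 * t) * e1 t) atTop (nhds (y1 - a1 / b11)) ∧
    Tendsto (fun t => Real.exp (b11 * t) * e2 t) atTop
      (nhds (-b21 * (y1 - a1 / b11) / (b22 - b11))) := by
  have hb11' : b11 ≠ 0 := ne_of_lt hb11
  have hb22' : b22 ≠ 0 := ne_of_gt hb22
  have hd : b22 - b11 ≠ 0 := (show (0:ℝ) < b22 - b11 by linarith).ne'
  set C : ℝ := y1 - a1 / b11 with hC
  set D : ℝ := a1 / b11 with hD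
  -- closed form for e1
  have he1' : ∀ s : ℝ, 0 ≤ s → e1 s = C * Real.exp (-b11 * s) + D := by
    intro s hs
    rw [he1 s hs, aux_int_exp (-b11) (neg_ne_zero.mpr hb11') s, hC, hD, div_neg]
    field_simp
    ring
  -- part 1
  have hE := aux_tendsto_exp b11 hb11
  have h1 : Tendsto (fun t => Real.exp (b11 * t) * e1 t) atTop (nhds C) := by
    apply Tendsto.congr' (f₁ := fun t => C + D * Real.exp (b11 * t))
    · filter_upwards [eventually_ge_atTop (0:ℝ)] with t ht
      rw [he1' t ht]
      rw [show Real.exp (-b11 * t) = (Real.exp (b11 * t))⁻¹ by rw [← Real.exp_neg]; ring_nf]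
      have n1 := Real.exp_ne_zero (b11 * t)
      field_simp
    · have h := (tendsto_const_nhds : Tendsto (fun _ : ℝ => C) atTop (nhds C)).add
        (hE.const_mul D)
      simpa using h
  refine ⟨h1, ?_⟩
  have hX := aux_tendsto_exp (b11 - b22) (by linarith)
  apply Tendsto.congr' (f₁ := fun t =>
    y2 * Real.exp ((b11 - b22) * t) + (a2 / b22) * (Real.exp (b11 * t) - Real.exp ((b11 - b22) * t))
      - b21 * (C * (1 - Real.exp ((b11 - b22) * t)) / (b22 - b11)
        + (D / b22) * (Real.exp (b11 * t) - Real.exp ((b11 - b22) * t))))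
  · filter_upwards [eventually_ge_atTop (0:ℝ)] with t ht
    have hI : (∫ s in (0:ℝ)..t, Real.exp (-b22 * (t - s)) * e1 s)
        = C * Real.exp (-b22 * t) * ((Real.exp ((b22 - b11) * t) - 1) / (b22 - b11))
          + D * Real.exp (-b22 * t) * ((Real.exp (b22 * t) - 1) / b22) := by
      have hcongr : (∫ s in (0:ℝ)..t, Real.exp (-b22 * (t - s)) * e1 s)
          = ∫ s in (0:ℝ)..t, (C * Real.exp (-b22 * t) * Real.exp ((b22 - b11) * s)
              + D * Real.exp (-b22 * t) * Real.exp (b22 * s)) := by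
        apply intervalIntegral.integral_congr
        intro s hs
        rw [Set.uIcc_of_le ht] at hs
        dsimp only
        rw [he1' s hs.1]
        rw [show Real.exp (-b22 * (t - s)) = Real.exp (b22 * s) * (Real.exp (b22 * t))⁻¹ by
              rw [← Real.exp_neg, ← Real.exp_add]; ring_nf,
            show Real.exp (-b11 * s) = (Real.exp (b11 * s))⁻¹ by rw [← Real.exp_neg]; ring_nf,
            show Real.exp (-b22 * t) = (Real.exp (b22 * t))⁻¹ by rw [← Real.exp_neg]; ring_nf,
            show Real.exp ((b22 - b11) * s) = Real.exp (b22 * s) * (Real.exp (b11 * s))⁻¹ by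
              rw [← Real.exp_neg, ← Real.exp_add]; ring_nf]
        have n1 := Real.exp_ne_zero (b11 * s)
        have n2 := Real.exp_ne_zero (b22 * s)
        have n3 := Real.exp_ne_zero (b22 * t)
        field_simp
      rw [hcongr, intervalIntegral.integral_add, intervalIntegral.integral_const_mul,
        intervalIntegral.integral_const_mul, aux_int_exp _ hd, aux_int_exp _ hb22']
      · exact (Continuous.intervalIntegrable (by continuity) 0 t)
      · exact (Continuous.intervalIntegrable (by continuity) 0 t)
    rw [he2 t ht, hI, aux_int_exp (-b22) (neg_ne_zero.mpr hb22') t]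
    rw [show Real.exp (-b22 * t) = (Real.exp (b22 * t))⁻¹ by rw [← Real.exp_neg]; ring_nf,
        show Real.exp ((b22 - b11) * t) = Real.exp (b22 * t) * (Real.exp (b11 * t))⁻¹ by
          rw [← Real.exp_neg, ← Real.exp_add]; ring_nf,
        show Real.exp ((b11 - b22) * t) = Real.exp (b11 * t) * (Real.exp (b22 * t))⁻¹ by
          rw [← Real.exp_neg, ← Real.exp_add]; ring_nf]
    have n1 := Real.exp_ne_zero (b11 * t)
    have n2 := Real.exp_ne_zero (b22 * t)
    set E := Real.exp (b11 * t) with hE1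
    set B := Real.exp (b22 * t) with hB1
    rw [div_neg]
    field_simp
    ring
  · have key : Tendsto (fun t =>
        y2 * Real.exp ((b11 - b22) * t) + (a2 / b22) * (Real.exp (b11 * t) - Real.exp ((b11 - b22) * t))
          - b21 * (C * (1 - Real.exp ((b11 - b22) * t)) / (b22 - b11)
            + (D / b22) * (Real.exp (b11 * t) - Real.exp ((b11 - b22) * t)))) atTop
        (nhds (y2 * 0 + (a2 / b22) * (0 - 0)
          - b21 * (C * (1 - 0) / (b22 - b11) + (D / b22) * (0 - 0)))) := by
      exact ((hX.const_mul y2).add ((hE.sub hX).const_mul (a2 / b22))).sub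
        (((((tendsto_const_nhds.sub hX).const_mul C).div_const (b22 - b11)).add
          ((hE.sub hX).const_mul (D / b22))).const_mul b21)
    convert key using 2
    ring
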